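/- Let Γ_1 and Γ_2 be simple graphs. If there exists a partition of Γ_1 into defensive k_1-alliances and a partition of Γ_2 into defensive k_2-alliances, then there exists a partition of the Cartesian product Γ_1×Γ_2 into defensive (k_1+k_2)-alliances, and ψ_{k_1+k_2}^d(Γ_1×Γ_2) ≥ ψ_{k_1}^d(Γ_1) · ψ_{k_2}^d(Γ_2). -/
import Mathlib


open Finset

/-- The number of neighbors that the vertex `v` has inside the set `S`. -/
def degIn {V : Type*} [Fintype V] [DecidableEq V] (G : SimpleGraph V) [DecidableRel G.Adj]
    (S : Finset V) (v : V) : ℕ :=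
  (S.filter fun u => G.Adj v u).card

/-- `S` is a defensive `k`-alliance: `S` is nonempty and every vertex of `S` has at least
`k` more neighbors inside `S` than outside. -/
def IsDefensiveAlliance {V : Type*} [Fintype V] [DecidableEq V] (G : SimpleGraph V)
    [DecidableRel G.Adj] (k : ℤ) (S : Finset V) : Prop :=
  S.Nonempty ∧ ∀ v ∈ S, (degIn G Sᶜ v : ℤ) + k ≤ (degIn G S v : ℤ)

/-- `S` is a dominating set: every vertex outside `S` has a neighbor in `S`. -/
def IsDominatingSet {V : Type*} [Fintype V] [DecidableEq V] (G : SimpleGraph V)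
    (S : Finset V) : Prop :=
  ∀ v ∉ S, ∃ u ∈ S, G.Adj v u

/-- A global defensive `k`-alliance is a defensive `k`-alliance which is a dominating set. -/
def IsGlobalDefensiveAlliance {V : Type*} [Fintype V] [DecidableEq V] (G : SimpleGraph V)
    [DecidableRel G.Adj] (k : ℤ) (S : Finset V) : Prop :=
  IsDefensiveAlliance G k S ∧ IsDominatingSet G S

/-- The defensive `k`-alliance number: the minimum cardinality of a defensive `k`-alliance. -/
noncomputable def defAllianceNum {V : Type*} [Fintype V] [DecidableEq V] (G : SimpleGraph V)
    [DecidableRel G.Adj] (k : ℤ) : ℕ :=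
  sInf {s : ℕ | ∃ S : Finset V, IsDefensiveAlliance G k S ∧ S.card = s}

/-- The global defensive `k`-alliance number. -/
noncomputable def globalDefAllianceNum {V : Type*} [Fintype V] [DecidableEq V] (G : SimpleGraph V)
    [DecidableRel G.Adj] (k : ℤ) : ℕ :=
  sInf {s : ℕ | ∃ S : Finset V, IsGlobalDefensiveAlliance G k S ∧ S.card = s}

/-- A partition of the vertex set all whose parts are defensive `k`-alliances. -/
def IsDefAlliancePartition {V : Type*} [Fintype V] [DecidableEq V] (G : SimpleGraph V)
    [DecidableRel G.Adj] (k : ℤ) (P : Finpartition (univ : Finset V)) : Prop :=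
  ∀ S ∈ P.parts, IsDefensiveAlliance G k S

/-- A partition of the vertex set all whose parts are global defensive `k`-alliances. -/
def IsGlobalDefAlliancePartition {V : Type*} [Fintype V] [DecidableEq V] (G : SimpleGraph V)
    [DecidableRel G.Adj] (k : ℤ) (P : Finpartition (univ : Finset V)) : Prop :=
  ∀ S ∈ P.parts, IsGlobalDefensiveAlliance G k S

/-- The defensive `k`-alliance partition number `ψₖᵈ`. -/
noncomputable def defPartitionNum {V : Type*} [Fintype V] [DecidableEq V] (G : SimpleGraph V)
    [DecidableRel G.Adj] (k : ℤ) : ℕ :=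
  sSup {r : ℕ | ∃ P : Finpartition (univ : Finset V),
    IsDefAlliancePartition G k P ∧ P.parts.card = r}

/-- The global defensive `k`-alliance partition number `ψₖᵍᵈ`. -/
noncomputable def globalDefPartitionNum {V : Type*} [Fintype V] [DecidableEq V]
    (G : SimpleGraph V) [DecidableRel G.Adj] (k : ℤ) : ℕ :=
  sSup {r : ℕ | ∃ P : Finpartition (univ : Finset V),
    IsGlobalDefAlliancePartition G k P ∧ P.parts.card = r}

instance {α β : Type*} [DecidableEq α] [DecidableEq β] (G : SimpleGraph α) (H : SimpleGraph β)
    [DecidableRel G.Adj] [DecidableRel H.Adj] : DecidableRel (G.boxProd H).Adj := fun _ _ =>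
  decidable_of_iff' _ SimpleGraph.boxProd_adj


lemma degIn_boxProd {α β : Type*} [Fintype α] [Fintype β] [DecidableEq α] [DecidableEq β]
    (G : SimpleGraph α) (H : SimpleGraph β) [DecidableRel G.Adj] [DecidableRel H.Adj]
    (W : Finset (α × β)) (A : Finset α) (B : Finset β) (a : α) (b : β)
    (hA : ∀ x, (x, b) ∈ W ↔ x ∈ A) (hB : ∀ y, (a, y) ∈ W ↔ y ∈ B) :
    degIn (G.boxProd H) W (a, b) = degIn G A a + degIn H B b := by
  have hset : (W.filter fun u => (G.boxProd H).Adj (a, b) u)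
      = ((A.filter fun x => G.Adj a x).image fun x => (x, b)) ∪
        ((B.filter fun y => H.Adj b y).image fun y => (a, y)) := by
    ext ⟨x, y⟩
    simp only [mem_filter, SimpleGraph.boxProd_adj, mem_union, mem_image, mem_filter]
    constructor
    · rintro ⟨hW, (⟨hadj, rfl⟩ | ⟨hadj, rfl⟩)⟩
      · exact Or.inl ⟨x, ⟨(hA x).1 hW, hadj⟩, rfl⟩
      · exact Or.inr ⟨y, ⟨(hB y).1 hW, hadj⟩, rfl⟩
    · rintro (⟨x', ⟨hx', hadj⟩, heq⟩ | ⟨y', ⟨hy', hadj⟩, heq⟩)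
      · injection heq with e1 e2; subst e1; subst e2
        exact ⟨(hA _).2 hx', Or.inl ⟨hadj, rfl⟩⟩
      · injection heq with e1 e2; subst e1; subst e2
        exact ⟨(hB _).2 hy', Or.inr ⟨hadj, rfl⟩⟩
  have hdisj : Disjoint ((A.filter fun x => G.Adj a x).image fun x => (x, b))
      ((B.filter fun y => H.Adj b y).image fun y => (a, y)) := by
    rw [Finset.disjoint_left]
    rintro ⟨x, y⟩ h1 h2
    simp only [mem_image, mem_filter] at h1 h2
    obtain ⟨x', ⟨_, hadj⟩, heq⟩ := h1
    obtain ⟨y', ⟨_, _⟩, heq'⟩ := h2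
    injection heq with e1 e2; injection heq' with e3 e4
    subst e1; subst e3
    exact G.irrefl hadj
  have h1 : ((A.filter fun x => G.Adj a x).image fun x => (x, b)).card
      = degIn G A a :=
    Finset.card_image_of_injective _ (fun x y h => congrArg Prod.fst h)
  have h2 : ((B.filter fun y => H.Adj b y).image fun y => (a, y)).card
      = degIn H B b :=
    Finset.card_image_of_injective _ (fun x y h => congrArg Prod.snd h)
  show (W.filter fun u => (G.boxProd H).Adj (a, b) u).card = _
  rw [hset, Finset.card_union_of_disjoint hdisj, h1, h2]

def prodPartition {α β : Type*} [Fintype α] [Fintype β] [DecidableEq α] [DecidableEq β]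
    (P : Finpartition (univ : Finset α)) (Q : Finpartition (univ : Finset β)) :
    Finpartition (univ : Finset (α × β)) where
  parts := (P.parts ×ˢ Q.parts).image fun st => st.1 ×ˢ st.2
  supIndep := by
    rw [Finset.supIndep_iff_pairwiseDisjoint]
    rintro W₁ hW₁ W₂ hW₂ hne
    simp only [coe_image, Set.mem_image, mem_coe, mem_product] at hW₁ hW₂
    obtain ⟨⟨S₁, T₁⟩, ⟨hS₁, hT₁⟩, rfl⟩ := hW₁
    obtain ⟨⟨S₂, T₂⟩, ⟨hS₂, hT₂⟩, rfl⟩ := hW₂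
    simp only [id, Finset.disjoint_left]
    rintro ⟨x, y⟩ hxy hxy'
    rw [mem_product] at hxy hxy'
    rcases eq_or_ne S₁ S₂ with rfl | hS
    · rcases eq_or_ne T₁ T₂ with rfl | hT
      · exact hne rfl
      · exact Finset.disjoint_left.1 (Q.disjoint hT₁ hT₂ hT) hxy.2 hxy'.2
    · exact Finset.disjoint_left.1 (P.disjoint hS₁ hS₂ hS) hxy.1 hxy'.1
  sup_parts := by
    apply Finset.Subset.antisymm
    · intro v hv
      simp only [mem_univ]
    · rintro ⟨x, y⟩ _
      obtain ⟨S, hS, hxS⟩ := P.exists_mem (mem_univ x)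
      obtain ⟨T, hT, hyT⟩ := Q.exists_mem (mem_univ y)
      rw [Finset.mem_sup]
      exact ⟨S ×ˢ T, mem_image.2 ⟨(S, T), mem_product.2 ⟨hS, hT⟩, rfl⟩,
        mem_product.2 ⟨hxS, hyT⟩⟩
  bot_notMem := by
    simp only [bot_eq_empty, mem_image, Prod.exists]
    rintro ⟨S, T, hST, hempty⟩
    rw [mem_product] at hST
    obtain ⟨x, hx⟩ := P.nonempty_of_mem_parts hST.1
    obtain ⟨y, hy⟩ := Q.nonempty_of_mem_parts hST.2
    exact absurd hempty (Finset.Nonempty.ne_empty ⟨(x, y), mem_product.2 ⟨hx, hy⟩⟩)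

lemma prodPartition_parts_card {α β : Type*} [Fintype α] [Fintype β] [DecidableEq α]
    [DecidableEq β] (P : Finpartition (univ : Finset α)) (Q : Finpartition (univ : Finset β)) :
    (prodPartition P Q).parts.card = P.parts.card * Q.parts.card := by
  rw [show (prodPartition P Q).parts = (P.parts ×ˢ Q.parts).image fun st => st.1 ×ˢ st.2 from rfl,
    Finset.card_image_of_injOn, Finset.card_product]
  rintro ⟨S₁, T₁⟩ h₁ ⟨S₂, T₂⟩ h₂ heq
  replace heq : S₁ ×ˢ T₁ = S₂ ×ˢ T₂ := heq
  simp only [mem_coe, mem_product] at h₁ h₂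
  obtain ⟨x, hx⟩ := P.nonempty_of_mem_parts h₁.1
  obtain ⟨y, hy⟩ := Q.nonempty_of_mem_parts h₁.2
  have h1 : S₁ = S₂ := by
    ext z
    constructor
    · intro hz
      have := heq ▸ (mem_product.2 ⟨hz, hy⟩ : (z, y) ∈ S₁ ×ˢ T₁)
      exact (mem_product.1 this).1
    · intro hz
      have hy2 : y ∈ T₂ := (mem_product.1 (heq ▸ (mem_product.2 ⟨hx, hy⟩ : (x, y) ∈ S₁ ×ˢ T₁))).2
      have := heq.symm ▸ (mem_product.2 ⟨hz, hy2⟩ : (z, y) ∈ S₂ ×ˢ T₂)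
      exact (mem_product.1 this).1
  have h2 : T₁ = T₂ := by
    ext z
    constructor
    · intro hz
      exact (mem_product.1 (heq ▸ (mem_product.2 ⟨hx, hz⟩ : (x, z) ∈ S₁ ×ˢ T₁))).2
    · intro hz
      have hx2 : x ∈ S₂ := (mem_product.1 (heq ▸ (mem_product.2 ⟨hx, hy⟩ : (x, y) ∈ S₁ ×ˢ T₁))).1
      exact (mem_product.1 (heq.symm ▸ (mem_product.2 ⟨hx2, hz⟩ : (x, z) ∈ S₂ ×ˢ T₂))).2
  rw [h1, h2]

lemma prod_alliance {α β : Type*} [Fintype α] [Fintype β] [DecidableEq α] [DecidableEq β]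
    (G : SimpleGraph α) (H : SimpleGraph β) [DecidableRel G.Adj] [DecidableRel H.Adj]
    (k₁ k₂ : ℤ) (S : Finset α) (T : Finset β)
    (hS : IsDefensiveAlliance G k₁ S) (hT : IsDefensiveAlliance H k₂ T) :
    IsDefensiveAlliance (G.boxProd H) (k₁ + k₂) (S ×ˢ T) := by
  obtain ⟨⟨x, hx⟩, hSd⟩ := hS
  obtain ⟨⟨y, hy⟩, hTd⟩ := hT
  refine ⟨⟨(x, y), mem_product.2 ⟨hx, hy⟩⟩, ?_⟩
  rintro ⟨a, b⟩ hab
  rw [mem_product] at hab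
  obtain ⟨ha, hb⟩ := hab
  have e1 : degIn (G.boxProd H) (S ×ˢ T) (a, b) = degIn G S a + degIn H T b := by
    apply degIn_boxProd
    · intro z; simp [mem_product, hb]
    · intro z; simp [mem_product, ha]
  have e2 : degIn (G.boxProd H) (S ×ˢ T)ᶜ (a, b) = degIn G Sᶜ a + degIn H Tᶜ b := by
    apply degIn_boxProd
    · intro z; simp [mem_product, hb]
    · intro z; simp [mem_product, ha]
  rw [e1, e2]
  have := hSd a ha
  have := hTd b hb
  push_cast
  linarith

lemma prod_partition_alliance {α β : Type*} [Fintype α] [Fintype β] [DecidableEq α]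
    [DecidableEq β] (G : SimpleGraph α) (H : SimpleGraph β) [DecidableRel G.Adj]
    [DecidableRel H.Adj] (k₁ k₂ : ℤ) {P : Finpartition (univ : Finset α)}
    {Q : Finpartition (univ : Finset β)} (hP : IsDefAlliancePartition G k₁ P)
    (hQ : IsDefAlliancePartition H k₂ Q) :
    IsDefAlliancePartition (G.boxProd H) (k₁ + k₂) (prodPartition P Q) := by
  intro W hW
  obtain ⟨⟨S, T⟩, hST, rfl⟩ := mem_image.1 hW
  rw [mem_product] at hST
  exact prod_alliance G H k₁ k₂ S T (hP S hST.1) (hQ T hST.2)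

/-- If there exists a partition of `Γᵢ` into defensive `kᵢ`-alliances, `i ∈ {1,2}`, then there
exists a partition of `Γ₁ × Γ₂` into defensive `(k₁+k₂)`-alliances, and
`ψ_{k₁+k₂}ᵈ(Γ₁×Γ₂) ≥ ψ_{k₁}ᵈ(Γ₁) ψ_{k₂}ᵈ(Γ₂)`. -/
theorem statement14 {α β : Type*} [Fintype α] [Fintype β] [DecidableEq α] [DecidableEq β]
    (G : SimpleGraph α) (H : SimpleGraph β) [DecidableRel G.Adj] [DecidableRel H.Adj]
    (k₁ k₂ : ℤ)
    (h₁ : ∃ P : Finpartition (univ : Finset α), IsDefAlliancePartition G k₁ P)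
    (h₂ : ∃ P : Finpartition (univ : Finset β), IsDefAlliancePartition H k₂ P) :
    (∃ Q : Finpartition (univ : Finset (α × β)),
        IsDefAlliancePartition (G.boxProd H) (k₁ + k₂) Q) ∧
      defPartitionNum G k₁ * defPartitionNum H k₂ ≤
        defPartitionNum (G.boxProd H) (k₁ + k₂) := by
  obtain ⟨P, hP⟩ := h₁
  obtain ⟨Q, hQ⟩ := h₂
  refine ⟨⟨prodPartition P Q, prod_partition_alliance G H k₁ k₂ hP hQ⟩, ?_⟩
  have bdd1 : BddAbove {r : ℕ | ∃ P : Finpartition (univ : Finset α),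
      IsDefAlliancePartition G k₁ P ∧ P.parts.card = r} := by
    refine ⟨Fintype.card α, ?_⟩
    rintro r ⟨R, _, rfl⟩
    simpa using R.card_parts_le_card
  have bdd2 : BddAbove {r : ℕ | ∃ P : Finpartition (univ : Finset β),
      IsDefAlliancePartition H k₂ P ∧ P.parts.card = r} := by
    refine ⟨Fintype.card β, ?_⟩
    rintro r ⟨R, _, rfl⟩
    simpa using R.card_parts_le_card
  have bdd3 : BddAbove {r : ℕ | ∃ P : Finpartition (univ : Finset (α × β)),
      IsDefAlliancePartition (G.boxProd H) (k₁ + k₂) P ∧ P.parts.card = r} := by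
    refine ⟨Fintype.card (α × β), ?_⟩
    rintro r ⟨R, _, rfl⟩
    simpa using R.card_parts_le_card
  have ne1 : Set.Nonempty {r : ℕ | ∃ P : Finpartition (univ : Finset α),
      IsDefAlliancePartition G k₁ P ∧ P.parts.card = r} := ⟨P.parts.card, P, hP, rfl⟩
  have ne2 : Set.Nonempty {r : ℕ | ∃ P : Finpartition (univ : Finset β),
      IsDefAlliancePartition H k₂ P ∧ P.parts.card = r} := ⟨Q.parts.card, Q, hQ, rfl⟩
  obtain ⟨P₁, hP₁, hc₁⟩ := Nat.sSup_mem ne1 bdd1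
  obtain ⟨P₂, hP₂, hc₂⟩ := Nat.sSup_mem ne2 bdd2
  refine le_csSup bdd3 ⟨prodPartition P₁ P₂, prod_partition_alliance G H k₁ k₂ hP₁ hP₂, ?_⟩
  rw [prodPartition_parts_card, hc₁, hc₂]
  rfl
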